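/- Let f : Ω₁ → ℝ be N-local and bounded. Then for every n ≥ 1 and η ∈ Ω₁: |Lⁿ f(η)| ≤ (|I_{−N−n}(η)| + … + |I_{N+n}(η)|)ⁿ · 2ⁿ · ‖f‖_∞, where Lⁿ denotes the n-th iterate of the formal generator L. -/
import Mathlib


open Filter

noncomputable section

attribute [local instance] Classical.propDecidable

/-- A configuration of the one-dimensional sandpile: heights in `{1,2}`. -/
def IsConfig (η : ℤ → ℤ) : Prop := ∀ x, η x = 1 ∨ η x = 2

/-- The indicator function of site `i`. -/
def e (i : ℤ) : ℤ → ℤ := fun x => if x = i then 1 else 0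

/-- `Kp i η = {j ≥ 0 : η (i+j) = 1}`. -/
def Kp (i : ℤ) (η : ℤ → ℤ) : Set ℕ := {j : ℕ | η (i + (j : ℤ)) = 1}

/-- `Km i η = {j > 0 : η (i−j) = 1}`. -/
def Km (i : ℤ) (η : ℤ → ℤ) : Set ℕ := {j : ℕ | 0 < j ∧ η (i - (j : ℤ)) = 1}

/-- `k⁺(i,η)`, meaningful when `Kp i η` is nonempty (i.e. `k⁺(i,η) < ∞`). -/
noncomputable def kplus (i : ℤ) (η : ℤ → ℤ) : ℕ := sInf (Kp i η)

/-- `k⁻(i,η)`, meaningful when `Km i η` is nonempty (i.e. `k⁻(i,η) < ∞`). -/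
noncomputable def kminus (i : ℤ) (η : ℤ → ℤ) : ℕ := sInf (Km i η)

/-- The toppling transformation `T i`, by the five cases of the paper. -/
noncomputable def T (i : ℤ) (η : ℤ → ℤ) : ℤ → ℤ :=
  if η i = 1 then η + e i
  else if (Kp i η).Nonempty then
    if (Km i η).Nonempty then
      η + e (i + (kplus i η : ℤ)) + e (i - (kminus i η : ℤ))
        - e (i + (kplus i η : ℤ) - (kminus i η : ℤ))
    else η + e (i + (kplus i η : ℤ))
  else if (Km i η).Nonempty then η + e (i - (kminus i η : ℤ))
  else η

/-- `Ω₁`: configurations with infinitely many ones to the left and to the right of the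
origin. -/
def Omega1 (η : ℤ → ℤ) : Prop :=
  IsConfig η ∧ {i : ℤ | i < 0 ∧ η i = 1}.Infinite ∧ {i : ℤ | 0 < i ∧ η i = 1}.Infinite

/-- `X : ℤ → ℤ` is the increasing enumeration of `η⁻¹({1})` normalized so that
`X 0 = min {i ≥ 0 : η i = 1}`. -/
def IsEnum (η : ℤ → ℤ) (X : ℤ → ℤ) : Prop :=
  StrictMono X ∧ (∀ i, η (X i) = 1) ∧ (∀ j, η j = 1 → ∃ i, X i = j) ∧
    0 ≤ X 0 ∧ ∀ j, 0 ≤ j → η j = 1 → X 0 ≤ j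

/-- A function `f` on configurations is `N`-local if `f η` depends only on the values of
`η` on `⋃_{j=-N}^{N} I_j(η)`, where `I_j(η) = (X_{j-1}(η), X_j(η)]`.  Since on each
interval `I_j` a configuration equals `2` except for the value `1` at the right endpoint
`X_j`, this is equivalent to saying that `f η` depends only on
`(X_{-N-1}(η), …, X_N(η))`. -/
def IsNLocal (N : ℕ) (f : (ℤ → ℤ) → ℝ) : Prop :=
  ∀ η ζ Xη Xζ, Omega1 η → Omega1 ζ → IsEnum η Xη → IsEnum ζ Xζ →
    (∀ j : ℤ, -(N : ℤ) - 1 ≤ j → j ≤ (N : ℤ) → Xη j = Xζ j) → f η = f ζ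

/-- The formal generator `L f (η) = Σ_{i ∈ ℤ} [f (T_i η) − f η]` (as a `tsum`). -/
noncomputable def Lgen (f : (ℤ → ℤ) → ℝ) : (ℤ → ℤ) → ℝ :=
  fun η => ∑' i : ℤ, (f (T i η) - f η)


section Aux

variable {η X : ℤ → ℤ}

lemma config_two (hη : Omega1 η) {x : ℤ} (hx : η x ≠ 1) : η x = 2 :=
  (hη.1 x).resolve_left hx

lemma enum_inj (hX : IsEnum η X) : Function.Injective X := hX.1.injective

lemma enum_neg (hX : IsEnum η X) {j : ℤ} (hj : j < 0) : X j < 0 := by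
  by_contra h
  push_neg at h
  have h0 : X 0 ≤ X j := hX.2.2.2.2 (X j) h (hX.2.1 j)
  exact absurd (hX.1 hj) (not_lt.2 h0)

lemma enum_nonneg (hX : IsEnum η X) {j : ℤ} (hj : 0 ≤ j) : 0 ≤ X j :=
  le_trans hX.2.2.2.1 (hX.1.monotone hj)

lemma exists_one_lt (hη : Omega1 η) (b : ℤ) : ∃ y, y < b ∧ η y = 1 := by
  obtain ⟨y, hy, hy2⟩ := (hη.2.1.diff (Set.finite_Icc b 0)).nonempty
  refine ⟨y, ?_, hy.2⟩
  simp only [Set.mem_Icc, not_and, not_le] at hy2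
  by_contra h
  push_neg at h
  exact absurd (hy2 h) (not_lt.2 hy.1.le)

lemma exists_one_gt (hη : Omega1 η) (b : ℤ) : ∃ y, b < y ∧ η y = 1 := by
  obtain ⟨y, hy, hy2⟩ := (hη.2.2.diff (Set.finite_Icc 0 b)).nonempty
  refine ⟨y, ?_, hy.2⟩
  simp only [Set.mem_Icc, not_and, not_le] at hy2
  exact hy2 hy.1.le

lemma enum_unbdd_below (hη : Omega1 η) (hX : IsEnum η X) (b : ℤ) : ∃ j, X j < b := by
  obtain ⟨y, hy, hy1⟩ := exists_one_lt hη b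
  obtain ⟨j, hj⟩ := hX.2.2.1 y hy1
  exact ⟨j, hj ▸ hy⟩

lemma enum_unbdd_above (hη : Omega1 η) (hX : IsEnum η X) (b : ℤ) : ∃ j, b < X j := by
  obtain ⟨y, hy, hy1⟩ := exists_one_gt hη b
  obtain ⟨j, hj⟩ := hX.2.2.1 y hy1
  exact ⟨j, hj ▸ hy⟩

lemma exists_window (hη : Omega1 η) (hX : IsEnum η X) (i : ℤ) :
    ∃ j, X j < i ∧ i ≤ X (j + 1) := by
  obtain ⟨m, hm⟩ := enum_unbdd_above hη hX (i - 1)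
  have hm' : i ≤ X m := by omega
  obtain ⟨j, hj, hmax⟩ := Int.exists_greatest_of_bdd (P := fun j => X j < i)
    ⟨m, fun z hz => by
      by_contra h
      push_neg at h
      exact absurd (hX.1.monotone h.le) (by omega)⟩
    (enum_unbdd_below hη hX i)
  refine ⟨j, hj, ?_⟩
  by_contra h
  push_neg at h
  have := hmax _ h
  omega

lemma window_unique (hX : IsEnum η X) {i j k : ℤ} (h1 : X j < i) (h2 : i ≤ X (j + 1))
    (h3 : X k < i) (h4 : i ≤ X (k + 1)) : j = k := by
  by_contra h
  rcases lt_or_gt_of_ne h with h' | h'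
  · have : X (j + 1) ≤ X k := hX.1.monotone (by omega)
    omega
  · have : X (k + 1) ≤ X j := hX.1.monotone (by omega)
    omega

lemma between_not_one (hX : IsEnum η X) {j y : ℤ} (h1 : X j < y) (h2 : y < X (j + 1)) :
    η y ≠ 1 := by
  intro hy
  obtain ⟨m, hm⟩ := hX.2.2.1 y hy
  subst hm
  have := hX.1.lt_iff_lt (a := j) (b := m)
  have := hX.1.lt_iff_lt (a := m) (b := j + 1)
  omega

lemma Kp_nonempty (hη : Omega1 η) (i : ℤ) : (Kp i η).Nonempty := by
  obtain ⟨y, hy, hy1⟩ := exists_one_gt hη i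
  refine ⟨(y - i).toNat, ?_⟩
  show η (i + ((y - i).toNat : ℤ)) = 1
  rw [Int.toNat_of_nonneg (by omega)]
  simpa using hy1

lemma Km_nonempty (hη : Omega1 η) (i : ℤ) : (Km i η).Nonempty := by
  obtain ⟨y, hy, hy1⟩ := exists_one_lt hη i
  refine ⟨(i - y).toNat, ?_, ?_⟩
  · omega
  · show η (i - ((i - y).toNat : ℤ)) = 1
    rw [Int.toNat_of_nonneg (by omega)]
    simpa using hy1

end Aux
section Widx

variable {η X : ℤ → ℤ}

/-- The window index of `i` w.r.t. the enumeration `X`: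
the unique `w` with `X w < i ≤ X (w+1)` (when it exists). -/
noncomputable def widx (X : ℤ → ℤ) (i : ℤ) : ℤ :=
  if h : ∃ j, X j < i ∧ i ≤ X (j + 1) then h.choose else 0

lemma widx_spec (hη : Omega1 η) (hX : IsEnum η X) (i : ℤ) :
    X (widx X i) < i ∧ i ≤ X (widx X i + 1) := by
  have h := exists_window hη hX i
  rw [widx, dif_pos h]
  exact h.choose_spec

lemma widx_eq (hX : IsEnum η X) {i w : ℤ} (h1 : X w < i) (h2 : i ≤ X (w + 1))
    (hw : X (widx X i) < i ∧ i ≤ X (widx X i + 1)) : widx X i = w :=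
  window_unique hX hw.1 hw.2 h1 h2

/-- If `η i = 1` then `i = X (widx X i + 1)`. -/
lemma one_eq_enum (hη : Omega1 η) (hX : IsEnum η X) {i : ℤ} (h1 : η i = 1) :
    i = X (widx X i + 1) := by
  obtain ⟨hw1, hw2⟩ := widx_spec hη hX i
  rcases eq_or_lt_of_le hw2 with h | h
  · exact h
  · exact absurd h1 (between_not_one hX hw1 h)

lemma kplus_eq (hη : Omega1 η) (hX : IsEnum η X) {i : ℤ} (h2 : η i = 2) :
    i + (kplus i η : ℤ) = X (widx X i + 1) ∧ 1 ≤ kplus i η := by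
  obtain ⟨hw1, hw2⟩ := widx_spec hη hX i
  set w := widx X i
  have hmem : kplus i η ∈ Kp i η := Nat.sInf_mem (Kp_nonempty hη i)
  have hone : η (i + (kplus i η : ℤ)) = 1 := hmem
  have hle : kplus i η ≤ (X (w + 1) - i).toNat := by
    apply Nat.sInf_le
    show η (i + ((X (w + 1) - i).toNat : ℤ)) = 1
    rw [Int.toNat_of_nonneg (by omega)]
    have := hX.2.1 (w + 1)
    simpa using this
  have hcast : (i + (kplus i η : ℤ)) ≤ X (w + 1) := by
    have := Int.toNat_of_nonneg (show (0:ℤ) ≤ X (w + 1) - i by omega)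
    omega
  have hpos : 1 ≤ kplus i η := by
    rcases Nat.eq_zero_or_pos (kplus i η) with h | h
    · rw [h] at hone; simp at hone; omega
    · exact h
  constructor
  · rcases eq_or_lt_of_le hcast with h | h
    · exact h
    · exfalso
      exact between_not_one hX (by omega) h hone
  · exact hpos

lemma kminus_eq (hη : Omega1 η) (hX : IsEnum η X) {i : ℤ} (h2 : η i = 2) :
    i - (kminus i η : ℤ) = X (widx X i) ∧ 1 ≤ kminus i η := by
  obtain ⟨hw1, hw2⟩ := widx_spec hη hX i
  set w := widx X i
  have hmem : kminus i η ∈ Km i η := Nat.sInf_mem (Km_nonempty hη i)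
  obtain ⟨hpos, hone⟩ := hmem
  have hle : kminus i η ≤ (i - X w).toNat := by
    apply Nat.sInf_le
    refine ⟨by omega, ?_⟩
    show η (i - ((i - X w).toNat : ℤ)) = 1
    rw [Int.toNat_of_nonneg (by omega)]
    have := hX.2.1 w
    simpa using this
  have hcast : X w ≤ i - (kminus i η : ℤ) := by
    have := Int.toNat_of_nonneg (show (0:ℤ) ≤ i - X w by omega)
    omega
  refine ⟨?_, hpos⟩
  rcases eq_or_lt_of_le hcast with h | h
  · exact h.symm
  · exfalso
    have hlt : i - (kminus i η : ℤ) < X (w + 1) := by omega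
    exact between_not_one hX h hlt hone

lemma T_apply_one {i : ℤ} (h1 : η i = 1) (x : ℤ) :
    T i η x = if x = i then 2 else η x := by
  rw [T, if_pos h1]
  show η x + e i x = _
  rw [e]
  split
  · rename_i h; subst h; omega
  · omega

lemma T_apply_two (hη : Omega1 η) (hX : IsEnum η X) {i : ℤ} (h2 : η i = 2) (x : ℤ) :
    T i η x = if x = X (widx X i) ∨ x = X (widx X i + 1) then 2
      else if x = X (widx X i) + X (widx X i + 1) - i then 1 else η x := by
  obtain ⟨hw1, hw2⟩ := widx_spec hη hX i
  set w := widx X i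
  obtain ⟨hkp, hkp1⟩ := kplus_eq hη hX h2
  obtain ⟨hkm, hkm1⟩ := kminus_eq hη hX h2
  have hne1 : ¬ η i = 1 := by omega
  rw [T, if_neg hne1, if_pos (Kp_nonempty hη i), if_pos (Km_nonempty hη i)]
  show η x + e (i + (kplus i η : ℤ)) x + e (i - (kminus i η : ℤ)) x
    - e (i + (kplus i η : ℤ) - (kminus i η : ℤ)) x = _
  have ha : i + (kplus i η : ℤ) = X (w + 1) := hkp
  have hb : i - (kminus i η : ℤ) = X w := hkm
  have hc : i + (kplus i η : ℤ) - (kminus i η : ℤ) = X w + X (w + 1) - i := by omega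
  rw [hc, ha, hb, e, e, e]
  have hWlt : X w < X (w + 1) := hX.1 (by omega)
  have hone1 : η (X w) = 1 := hX.2.1 w
  have hone2 : η (X (w + 1)) = 1 := hX.2.1 (w + 1)
  have hilt : i < X (w + 1) := by
    rcases eq_or_lt_of_le hw2 with h | h
    · exfalso; rw [← h] at hone2; omega
    · exact h
  have hp1 : X w < X w + X (w + 1) - i := by omega
  have hp2 : X w + X (w + 1) - i < X (w + 1) := by omega
  have hpone : η (X w + X (w + 1) - i) ≠ 1 := between_not_one hX hp1 hp2
  have hptwo : η (X w + X (w + 1) - i) = 2 := config_two hη hpone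
  by_cases hx1 : x = X (w + 1)
  · subst hx1
    rw [if_pos rfl, if_neg (by omega), if_neg (by omega), if_pos (Or.inr rfl)]
    omega
  · by_cases hx2 : x = X w
    · subst hx2
      rw [if_neg (by omega), if_pos rfl, if_neg (by omega), if_pos (Or.inl rfl)]
      omega
    · by_cases hx3 : x = X w + X (w + 1) - i
      · subst hx3
        rw [if_pos rfl, if_neg (by omega), if_neg (by omega), if_neg (by omega),
          if_pos rfl]
        omega
      · rw [if_neg hx1, if_neg hx2, if_neg hx3, if_neg (by tauto), if_neg hx3]
        omega

end Widx
section Tfacts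

variable {η X : ℤ → ℤ}

lemma window_facts (hη : Omega1 η) (hX : IsEnum η X) {i : ℤ} (h2 : η i = 2) :
    X (widx X i) < i ∧ i < X (widx X i + 1) ∧
      X (widx X i) < X (widx X i) + X (widx X i + 1) - i ∧
      X (widx X i) + X (widx X i + 1) - i < X (widx X i + 1) := by
  obtain ⟨hw1, hw2⟩ := widx_spec hη hX i
  have hone2 : η (X (widx X i + 1)) = 1 := hX.2.1 (widx X i + 1)
  have : i ≠ X (widx X i + 1) := fun h => by rw [h] at h2; omega
  refine ⟨hw1, by omega, by omega, by omega⟩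

lemma Tone_one {i x : ℤ} (h1 : η i = 1) :
    T i η x = 1 ↔ (η x = 1 ∧ x ≠ i) := by
  rw [T_apply_one h1]
  split
  · rename_i h; subst h; constructor <;> intro hh
    · omega
    · exact absurd rfl hh.2
  · rename_i h; tauto

lemma Tone_two (hη : Omega1 η) (hX : IsEnum η X) {i x : ℤ} (h2 : η i = 2) :
    T i η x = 1 ↔ (x = X (widx X i) + X (widx X i + 1) - i ∨
      (η x = 1 ∧ x ≠ X (widx X i) ∧ x ≠ X (widx X i + 1))) := by
  obtain ⟨hf1, hf2, hf3, hf4⟩ := window_facts hη hX h2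
  rw [T_apply_two hη hX h2]
  split
  · rename_i h
    constructor <;> intro hh
    · omega
    · rcases hh with hh | hh
      · omega
      · tauto
  · rename_i h
    push_neg at h
    split
    · rename_i hp
      exact ⟨fun _ => Or.inl hp, fun _ => rfl⟩
    · rename_i hp
      constructor
      · intro hh; exact Or.inr ⟨hh, h.1, h.2⟩
      · rintro (hh | hh)
        · exact absurd hh hp
        · exact hh.1

lemma Omega1_T (hη : Omega1 η) (hX : IsEnum η X) (i : ℤ) : Omega1 (T i η) := by
  have hconf : IsConfig (T i η) := by
    intro x
    rcases hη.1 i with h1 | h2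
    · rw [T_apply_one h1]
      split
      · right; rfl
      · exact hη.1 x
    · rw [T_apply_two hη hX h2]
      split
      · right; rfl
      · split
        · left; rfl
        · exact hη.1 x
  have hsub : ∃ F : Set ℤ, F.Finite ∧ ∀ x ∉ F, η x = 1 → T i η x = 1 := by
    rcases hη.1 i with h1 | h2
    · refine ⟨{i}, Set.finite_singleton i, fun x hx h => ?_⟩
      rw [T_apply_one h1, if_neg (by simpa using hx)]
      exact h
    · refine ⟨{X (widx X i), X (widx X i + 1)}, (Set.finite_singleton _).insert _,
        fun x hx h => ?_⟩
      simp only [Set.mem_insert_iff, Set.mem_singleton_iff, not_or] at hx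
      rw [T_apply_two hη hX h2, if_neg (by tauto)]
      split
      · rfl
      · exact h
  obtain ⟨F, hF, hFsub⟩ := hsub
  refine ⟨hconf, ?_, ?_⟩
  · refine (hη.2.1.diff hF).mono ?_
    rintro x ⟨⟨hx1, hx2⟩, hx3⟩
    exact ⟨hx1, hFsub x hx3 hx2⟩
  · refine (hη.2.2.diff hF).mono ?_
    rintro x ⟨⟨hx1, hx2⟩, hx3⟩
    exact ⟨hx1, hFsub x hx3 hx2⟩

end Tfacts
section Wsec

/-- Unnormalized enumeration of the ones of `T i η`, built from `X`. -/
noncomputable def Wfun (η X : ℤ → ℤ) (i : ℤ) (j : ℤ) : ℤ :=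
  if η i = 1 then (if j ≤ widx X i then X j else X (j + 1))
  else if j < widx X i then X j
  else if j = widx X i then X (widx X i) + X (widx X i + 1) - i
  else X (j + 1)

/-- The normalizing shift. -/
noncomputable def sshift (η X : ℤ → ℤ) (i : ℤ) : ℤ :=
  if 0 ≤ Wfun η X i (-1) then -1 else 0

/-- The canonical enumeration of the ones of `T i η`. -/
noncomputable def Tenum (η X : ℤ → ℤ) (i : ℤ) : ℤ → ℤ :=
  fun j => Wfun η X i (j + sshift η X i)

variable {η X : ℤ → ℤ} {i j m : ℤ}

lemma Wfun_c1_le (h1 : η i = 1) (hj : j ≤ widx X i) : Wfun η X i j = X j := by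
  rw [Wfun, if_pos h1, if_pos hj]

lemma Wfun_c1_gt (h1 : η i = 1) (hj : widx X i < j) : Wfun η X i j = X (j + 1) := by
  rw [Wfun, if_pos h1, if_neg (by omega)]

lemma Wfun_c2_lt (h1 : ¬ η i = 1) (hj : j < widx X i) : Wfun η X i j = X j := by
  rw [Wfun, if_neg h1, if_pos hj]

lemma Wfun_c2_eq (h1 : ¬ η i = 1) :
    Wfun η X i (widx X i) = X (widx X i) + X (widx X i + 1) - i := by
  rw [Wfun, if_neg h1, if_neg (lt_irrefl _), if_pos rfl]

lemma Wfun_c2_gt (h1 : ¬ η i = 1) (hj : widx X i < j) : Wfun η X i j = X (j + 1) := by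
  rw [Wfun, if_neg h1, if_neg (by omega), if_neg (by omega)]

lemma Wfun_bounds (hη : Omega1 η) (hX : IsEnum η X) (i j : ℤ) :
    X j ≤ Wfun η X i j ∧ Wfun η X i j ≤ X (j + 1) := by
  have hmono : X j ≤ X (j + 1) := (hX.1 (by omega)).le
  by_cases h1 : η i = 1
  · by_cases hj : j ≤ widx X i
    · rw [Wfun_c1_le h1 hj]; omega
    · rw [Wfun_c1_gt h1 (by omega)]; omega
  · have h2 : η i = 2 := config_two hη h1
    obtain ⟨hf1, hf2, hf3, hf4⟩ := window_facts hη hX h2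
    rcases lt_trichotomy j (widx X i) with hj | hj | hj
    · rw [Wfun_c2_lt h1 hj]; omega
    · subst hj; rw [Wfun_c2_eq h1]; omega
    · rw [Wfun_c2_gt h1 hj]; omega

lemma Wfun_strictMono (hη : Omega1 η) (hX : IsEnum η X) (i : ℤ) :
    StrictMono (Wfun η X i) := by
  apply strictMono_int_of_lt_succ
  intro j
  by_cases h1 : η i = 1
  · by_cases hj : j + 1 ≤ widx X i
    · rw [Wfun_c1_le h1 (show j ≤ widx X i by omega), Wfun_c1_le h1 hj]
      exact hX.1 (by omega)
    · rw [Wfun_c1_gt h1 (show widx X i < j + 1 by omega)]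
      by_cases hj2 : j ≤ widx X i
      · rw [Wfun_c1_le h1 hj2]; exact hX.1 (by omega)
      · rw [Wfun_c1_gt h1 (show widx X i < j by omega)]; exact hX.1 (by omega)
  · have h2 : η i = 2 := config_two hη h1
    obtain ⟨hf1, hf2, hf3, hf4⟩ := window_facts hη hX h2
    rcases lt_trichotomy (j + 1) (widx X i) with hj | hj | hj
    · rw [Wfun_c2_lt h1 hj, Wfun_c2_lt h1 (show j < widx X i by omega)]
      exact hX.1 (by omega)
    · have hXj : X j < X (widx X i) := hX.1 (by omega)
      rw [Wfun_c2_lt h1 (show j < widx X i by omega), hj, Wfun_c2_eq h1]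
      omega
    · rw [Wfun_c2_gt h1 hj]
      rcases lt_trichotomy j (widx X i) with hj2 | hj2 | hj2
      · omega
      · have hXj : X (widx X i + 1) < X (j + 1 + 1) := hX.1 (by omega)
        subst hj2
        rw [Wfun_c2_eq h1]
        omega
      · rw [Wfun_c2_gt h1 hj2]; exact hX.1 (by omega)

lemma Wfun_one (hη : Omega1 η) (hX : IsEnum η X) (i j : ℤ) :
    T i η (Wfun η X i j) = 1 := by
  have hinj := enum_inj hX
  by_cases h1 : η i = 1
  · rw [Tone_one h1]
    have hi : i = X (widx X i + 1) := one_eq_enum hη hX h1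
    by_cases hj : j ≤ widx X i
    · rw [Wfun_c1_le h1 hj]
      exact ⟨hX.2.1 j, fun h => by
        rw [hi] at h; have := hinj h; omega⟩
    · rw [Wfun_c1_gt h1 (by omega)]
      exact ⟨hX.2.1 (j + 1), fun h => by
        rw [hi] at h; have := hinj h; omega⟩
  · have h2 : η i = 2 := config_two hη h1
    rw [Tone_two hη hX h2]
    rcases lt_trichotomy j (widx X i) with hj | hj | hj
    · rw [Wfun_c2_lt h1 hj]
      exact Or.inr ⟨hX.2.1 j, fun h => by have := hinj h; omega,
        fun h => by have := hinj h; omega⟩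
    · subst hj; rw [Wfun_c2_eq h1]; exact Or.inl rfl
    · rw [Wfun_c2_gt h1 hj]
      exact Or.inr ⟨hX.2.1 (j + 1), fun h => by have := hinj h; omega,
        fun h => by have := hinj h; omega⟩

lemma Wfun_surj (hη : Omega1 η) (hX : IsEnum η X) (i y : ℤ) (hy : T i η y = 1) :
    ∃ j, Wfun η X i j = y := by
  by_cases h1 : η i = 1
  · rw [Tone_one h1] at hy
    obtain ⟨m, hm⟩ := hX.2.2.1 y hy.1
    have hi : i = X (widx X i + 1) := one_eq_enum hη hX h1
    have hmne : m ≠ widx X i + 1 := by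
      intro h
      exact hy.2 (by rw [← hm, h, ← hi])
    by_cases hmw : m ≤ widx X i
    · exact ⟨m, by rw [Wfun_c1_le h1 hmw, hm]⟩
    · refine ⟨m - 1, ?_⟩
      rw [Wfun_c1_gt h1 (by omega)]
      simpa using hm
  · have h2 : η i = 2 := config_two hη h1
    rw [Tone_two hη hX h2] at hy
    rcases hy with hy | ⟨hy1, hy2, hy3⟩
    · exact ⟨widx X i, by rw [Wfun_c2_eq h1, hy]⟩
    · obtain ⟨m, hm⟩ := hX.2.2.1 y hy1
      have hinj := enum_inj hX
      have hne1 : m ≠ widx X i := fun h => hy2 (by rw [← hm, h])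
      have hne2 : m ≠ widx X i + 1 := fun h => hy3 (by rw [← hm, h])
      by_cases hmw : m < widx X i
      · exact ⟨m, by rw [Wfun_c2_lt h1 hmw, hm]⟩
      · refine ⟨m - 1, ?_⟩
        rw [Wfun_c2_gt h1 (by omega)]
        simpa using hm

lemma Wfun_neg_of_le (hη : Omega1 η) (hX : IsEnum η X) (hj : j ≤ -2) :
    Wfun η X i j < 0 := by
  have h1 := (Wfun_bounds hη hX i j).2
  have h2 : X (j + 1) ≤ X (-1) := hX.1.monotone (by omega)
  have h3 : X (-1) < 0 := enum_neg hX (by omega)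
  omega

lemma sshift_cases : sshift η X i = -1 ∨ sshift η X i = 0 := by
  rw [sshift]; split <;> simp

lemma Wfun_lt_sshift (hη : Omega1 η) (hX : IsEnum η X) (hj : j < sshift η X i) :
    Wfun η X i j < 0 := by
  rw [sshift] at hj
  split at hj
  · exact Wfun_neg_of_le hη hX (by omega)
  · rcases eq_or_lt_of_le (show j ≤ -1 by omega) with h | h
    · subst h; rename_i hh; omega
    · exact Wfun_neg_of_le hη hX (by omega)

lemma Wfun_sshift_nonneg (hη : Omega1 η) (hX : IsEnum η X) (i : ℤ) :
    0 ≤ Wfun η X i (sshift η X i) := by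
  rw [sshift]
  split
  · assumption
  · have := (Wfun_bounds hη hX i 0).1
    have := hX.2.2.2.1
    omega

lemma Tenum_isEnum (hη : Omega1 η) (hX : IsEnum η X) (i : ℤ) :
    IsEnum (T i η) (Tenum η X i) := by
  have hW := Wfun_strictMono hη hX i
  refine ⟨fun a b h => hW (by omega), fun j => Wfun_one hη hX i _, ?_, ?_, ?_⟩
  · intro y hy
    obtain ⟨m, hm⟩ := Wfun_surj hη hX i y hy
    refine ⟨m - sshift η X i, ?_⟩
    show Wfun η X i (m - sshift η X i + sshift η X i) = y
    rw [show m - sshift η X i + sshift η X i = m by ring, hm]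
  · show 0 ≤ Wfun η X i (0 + sshift η X i)
    rw [zero_add]
    exact Wfun_sshift_nonneg hη hX i
  · intro y hy0 hy1
    obtain ⟨m, hm⟩ := Wfun_surj hη hX i y hy1
    have hms : sshift η X i ≤ m := by
      by_contra h
      have := Wfun_lt_sshift hη hX (show m < sshift η X i by omega)
      omega
    show Wfun η X i (0 + sshift η X i) ≤ y
    rw [zero_add, ← hm]
    exact hW.monotone hms

lemma Tenum_bounds (hη : Omega1 η) (hX : IsEnum η X) (i j : ℤ) :
    X (j - 1) ≤ Tenum η X i j ∧ Tenum η X i j ≤ X (j + 1) := by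
  have hb := Wfun_bounds hη hX i (j + sshift η X i)
  have hs := sshift_cases (η := η) (X := X) (i := i)
  have h1 : X (j - 1) ≤ X (j + sshift η X i) := hX.1.monotone (by omega)
  have h2 : X (j + sshift η X i + 1) ≤ X (j + 1) := hX.1.monotone (by omega)
  exact ⟨le_trans h1 hb.1, le_trans hb.2 h2⟩

lemma Tenum_tailR (hη : Omega1 η) (hX : IsEnum η X) (hm : 1 ≤ m) (him : X m < i) :
    ∀ j ≤ m - 1, Tenum η X i j = X j := by
  obtain ⟨hw1, hw2⟩ := widx_spec hη hX i
  have hmw : m ≤ widx X i := by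
    have : X m < X (widx X i + 1) := by omega
    have := hX.1.lt_iff_lt.mp this
    omega
  have hWneg : Wfun η X i (-1) < 0 := by
    have hneg : X (-1) < 0 := enum_neg hX (by omega)
    by_cases h1 : η i = 1
    · rw [Wfun_c1_le h1 (by omega)]; exact hneg
    · rw [Wfun_c2_lt h1 (by omega)]; exact hneg
  have hs : sshift η X i = 0 := by rw [sshift, if_neg (by omega)]
  intro j hj
  show Wfun η X i (j + sshift η X i) = X j
  rw [hs, add_zero]
  by_cases h1 : η i = 1
  · exact Wfun_c1_le h1 (by omega)
  · exact Wfun_c2_lt h1 (by omega)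

lemma Tenum_tailL (hη : Omega1 η) (hX : IsEnum η X) (hm : m ≤ -1) (him : i ≤ X m) :
    ∀ j, m + 1 ≤ j → Tenum η X i j = X j := by
  obtain ⟨hw1, hw2⟩ := widx_spec hη hX i
  have hmw : widx X i < m := by
    have : X (widx X i) < X m := by omega
    exact hX.1.lt_iff_lt.mp this
  have hWpos : 0 ≤ Wfun η X i (-1) := by
    have hpos : 0 ≤ X 0 := hX.2.2.2.1
    by_cases h1 : η i = 1
    · rw [Wfun_c1_gt h1 (by omega)]; simpa using hpos
    · rw [Wfun_c2_gt h1 (by omega)]; simpa using hpos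
  have hs : sshift η X i = -1 := by rw [sshift, if_pos hWpos]
  intro j hj
  show Wfun η X i (j + sshift η X i) = X j
  rw [hs]
  by_cases h1 : η i = 1
  · rw [Wfun_c1_gt h1 (by omega)]; ring_nf
  · rw [Wfun_c2_gt h1 (by omega)]; ring_nf

end Wsec
section Congr

lemma Tenum_congr {η ζ Xη Xζ : ℤ → ℤ} {i a b : ℤ}
    (hη : Omega1 η) (hζ : Omega1 ζ) (hXη : IsEnum η Xη) (hXζ : IsEnum ζ Xζ)
    (ha : a ≤ -2) (hb : 1 ≤ b)
    (hagree : ∀ j, a ≤ j → j ≤ b → Xη j = Xζ j)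
    (hia : Xη a < i) (hib : i ≤ Xη b) :
    ∀ j, a + 1 ≤ j → j ≤ b - 1 → Tenum η Xη i j = Tenum ζ Xζ i j := by
  obtain ⟨hw1, hw2⟩ := widx_spec hη hXη i
  set w := widx Xη i with hwdef
  have haw : a ≤ w := by
    by_contra h
    have : Xη (w + 1) ≤ Xη a := hXη.1.monotone (by omega)
    omega
  have hwb : w + 1 ≤ b := by
    by_contra h
    have : Xη b ≤ Xη w := hXη.1.monotone (by omega)
    omega
  have hwz : widx Xζ i = w := by
    apply widx_eq hXζ (i := i)
    · rw [← hagree w (by omega) (by omega)]; exact hw1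
    · rw [← hagree (w + 1) (by omega) (by omega)]; exact hw2
    · exact widx_spec hζ hXζ i
  have hcase : η i = 1 ↔ ζ i = 1 := by
    constructor
    · intro h1
      have hi : i = Xη (w + 1) := one_eq_enum hη hXη h1
      rw [hi, hagree (w + 1) (by omega) (by omega)]
      exact hXζ.2.1 (w + 1)
    · intro h1
      have hi : i = Xζ (widx Xζ i + 1) := one_eq_enum hζ hXζ h1
      rw [hwz] at hi
      rw [hi, ← hagree (w + 1) (by omega) (by omega)]
      exact hXη.2.1 (w + 1)
  have hWagree : ∀ j, a ≤ j → j ≤ b - 1 → Wfun η Xη i j = Wfun ζ Xζ i j := by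
    intro j hj1 hj2
    by_cases h1 : η i = 1
    · have h1' : ζ i = 1 := hcase.mp h1
      by_cases hjw : j ≤ w
      · rw [Wfun_c1_le h1 hjw, Wfun_c1_le h1' (by rw [hwz]; exact hjw)]
        exact hagree j (by omega) (by omega)
      · rw [Wfun_c1_gt h1 (show w < j by omega),
          Wfun_c1_gt h1' (by rw [hwz]; omega)]
        exact hagree (j + 1) (by omega) (by omega)
    · have h1' : ¬ ζ i = 1 := fun h => h1 (hcase.mpr h)
      rcases lt_trichotomy j w with hjw | hjw | hjw
      · rw [Wfun_c2_lt h1 hjw, Wfun_c2_lt h1' (by rw [hwz]; exact hjw)]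
        exact hagree j (by omega) (by omega)
      · rw [hjw]
        rw [show Wfun η Xη i w = Xη w + Xη (w + 1) - i from Wfun_c2_eq h1,
          show Wfun ζ Xζ i w = Xζ w + Xζ (w + 1) - i from by
            rw [← hwz]; exact Wfun_c2_eq h1',
          hagree w (by omega) (by omega), hagree (w + 1) (by omega) (by omega)]
      · rw [Wfun_c2_gt h1 hjw, Wfun_c2_gt h1' (by rw [hwz]; exact hjw)]
        exact hagree (j + 1) (by omega) (by omega)
  have hs : sshift η Xη i = sshift ζ Xζ i := by
    rw [sshift, sshift, hWagree (-1) (by omega) (by omega)]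
  intro j hj1 hj2
  show Wfun η Xη i (j + sshift η Xη i) = Wfun ζ Xζ i (j + sshift ζ Xζ i)
  rw [← hs]
  have := sshift_cases (η := η) (X := Xη) (i := i)
  exact hWagree (j + sshift η Xη i) (by omega) (by omega)

lemma term_vanish {η X : ℤ → ℤ} (M : ℕ) (g : (ℤ → ℤ) → ℝ) (hg : IsNLocal M g)
    (hη : Omega1 η) (hX : IsEnum η X) (i : ℤ)
    (hi : i ≤ X (-(M : ℤ) - 2) ∨ X ((M : ℤ) + 1) < i) :
    g (T i η) = g η := by
  apply hg (T i η) η (Tenum η X i) X (Omega1_T hη hX i) hη (Tenum_isEnum hη hX i) hX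
  intro j hj1 hj2
  rcases hi with hi | hi
  · exact Tenum_tailL hη hX (m := -(M : ℤ) - 2) (by omega) hi j (by omega)
  · exact Tenum_tailR hη hX (m := (M : ℤ) + 1) (by omega) hi j (by omega)

lemma Lgen_eq_sum {η X : ℤ → ℤ} (M : ℕ) (g : (ℤ → ℤ) → ℝ) (hg : IsNLocal M g)
    (hη : Omega1 η) (hX : IsEnum η X) :
    Lgen g η = ∑ i ∈ Finset.Ioc (X (-(M : ℤ) - 2)) (X ((M : ℤ) + 1)),
      (g (T i η) - g η) := by
  apply tsum_eq_sum
  intro i hi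
  rw [Finset.mem_Ioc] at hi
  push_neg at hi
  have : i ≤ X (-(M : ℤ) - 2) ∨ X ((M : ℤ) + 1) < i := by
    by_cases h : X (-(M : ℤ) - 2) < i
    · exact Or.inr (hi h)
    · exact Or.inl (by omega)
  rw [term_vanish M g hg hη hX i this, sub_self]

lemma Lgen_local (M : ℕ) (g : (ℤ → ℤ) → ℝ) (hg : IsNLocal M g) :
    IsNLocal (M + 1) (Lgen g) := by
  intro η ζ Xη Xζ hη hζ hXη hXζ hagree
  have hagree' : ∀ j : ℤ, -(M : ℤ) - 2 ≤ j → j ≤ (M : ℤ) + 1 → Xη j = Xζ j := by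
    intro j h1 h2
    apply hagree j <;> push_cast <;> omega
  rw [Lgen_eq_sum M g hg hη hXη, Lgen_eq_sum M g hg hζ hXζ,
    ← hagree' (-(M : ℤ) - 2) (by omega) (by omega),
    ← hagree' ((M : ℤ) + 1) (by omega) (by omega)]
  apply Finset.sum_congr rfl
  intro i hi
  rw [Finset.mem_Ioc] at hi
  have hgη : g η = g ζ := by
    apply hg η ζ Xη Xζ hη hζ hXη hXζ
    intro j h1 h2
    exact hagree' j (by omega) (by omega)
  have hgT : g (T i η) = g (T i ζ) := by
    apply hg (T i η) (T i ζ) (Tenum η Xη i) (Tenum ζ Xζ i)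
      (Omega1_T hη hXη i) (Omega1_T hζ hXζ i)
      (Tenum_isEnum hη hXη i) (Tenum_isEnum hζ hXζ i)
    intro j h1 h2
    exact Tenum_congr hη hζ hXη hXζ (a := -(M : ℤ) - 2) (b := (M : ℤ) + 1)
      (by omega) (by omega) hagree' hi.1 hi.2 j (by omega) (by omega)
  rw [hgη, hgT]

lemma iter_local (N : ℕ) (f : (ℤ → ℤ) → ℝ) (hf : IsNLocal N f) (n : ℕ) :
    IsNLocal (N + n) (Lgen^[n] f) := by
  induction n with
  | zero => simpa using hf
  | succ n ih =>
      rw [Function.iterate_succ_apply']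
      have := Lgen_local (N + n) (Lgen^[n] f) ih
      simpa [Nat.add_assoc] using this

end Congr
section Main

lemma abs_le_helper {a b B : ℝ} (h1 : |a| ≤ B) (h2 : |b| ≤ B) : |a - b| ≤ 2 * B := by
  calc |a - b| ≤ |a| + |b| := abs_sub a b
  _ ≤ 2 * B := by linarith

lemma main_bound (N : ℕ) (f : (ℤ → ℤ) → ℝ) (hf : IsNLocal N f)
    (C : ℝ) (hC : ∀ ζ, |f ζ| ≤ C) (n : ℕ) :
    ∀ η X, Omega1 η → IsEnum η X →
      |(Lgen^[n] f) η| ≤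
        ((X ((N : ℤ) + n) - X (-(N : ℤ) - n - 1) : ℤ) : ℝ) ^ n * 2 ^ n * C := by
  induction n with
  | zero =>
      intro η X hη hX
      simpa using hC η
  | succ n ih =>
      intro η X hη hX
      have hC0 : 0 ≤ C := le_trans (abs_nonneg _) (hC η)
      have hloc : IsNLocal (N + n) (Lgen^[n] f) := iter_local N f hf n
      set g := Lgen^[n] f with hg
      set lo := X (-((N + n : ℕ) : ℤ) - 2) with hlo
      set hi := X (((N + n : ℕ) : ℤ) + 1) with hhi
      have hlohi : lo ≤ hi := hX.1.monotone (by push_cast; omega)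
      set D : ℝ := ((hi - lo : ℤ) : ℝ) with hD
      have hD0 : (0 : ℝ) ≤ D := by
        rw [hD]; exact_mod_cast sub_nonneg.mpr hlohi
      set B : ℝ := D ^ n * 2 ^ n * C with hB
      have hB0 : 0 ≤ B := by positivity
      have hterm : ∀ i : ℤ, |g (T i η) - g η| ≤ 2 * B := by
        intro i
        have h1 : |g (T i η)| ≤ B := by
          refine le_trans (ih (T i η) (Tenum η X i) (Omega1_T hη hX i)
            (Tenum_isEnum hη hX i)) ?_
          rw [hB]
          have hub := (Tenum_bounds hη hX i ((N : ℤ) + n)).2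
          have hlb := (Tenum_bounds hη hX i (-(N : ℤ) - n - 1)).1
          rw [show ((N : ℤ) + n) + 1 = ((N + n : ℕ) : ℤ) + 1 by push_cast; ring] at hub
          rw [show (-(N : ℤ) - n - 1) - 1 = -((N + n : ℕ) : ℤ) - 2 by push_cast; ring]
            at hlb
          have hmono : Tenum η X i (-(N : ℤ) - n - 1) ≤ Tenum η X i ((N : ℤ) + n) :=
            (Tenum_isEnum hη hX i).1.monotone (by omega)
          have hbase0 : (0 : ℝ) ≤
              ((Tenum η X i ((N : ℤ) + n) - Tenum η X i (-(N : ℤ) - n - 1) : ℤ) : ℝ) := by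
            exact_mod_cast sub_nonneg.mpr hmono
          have hZ : Tenum η X i ((N : ℤ) + n) - Tenum η X i (-(N : ℤ) - n - 1)
              ≤ hi - lo := by omega
          have hbase : ((Tenum η X i ((N : ℤ) + n)
              - Tenum η X i (-(N : ℤ) - n - 1) : ℤ) : ℝ) ≤ D := by
            rw [hD]
            exact Int.cast_le.mpr hZ
          exact mul_le_mul_of_nonneg_right
            (mul_le_mul_of_nonneg_right (pow_le_pow_left₀ hbase0 hbase n)
              (by positivity)) hC0
        have h2 : |g η| ≤ B := by
          refine le_trans (ih η X hη hX) ?_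
          rw [hB]
          have hub : X ((N : ℤ) + n) ≤ hi := hX.1.monotone (by push_cast; omega)
          have hlb : lo ≤ X (-(N : ℤ) - n - 1) := hX.1.monotone (by push_cast; omega)
          have hmono : X (-(N : ℤ) - n - 1) ≤ X ((N : ℤ) + n) :=
            hX.1.monotone (by omega)
          have hbase0 : (0 : ℝ) ≤ ((X ((N : ℤ) + n) - X (-(N : ℤ) - n - 1) : ℤ) : ℝ) := by
            exact_mod_cast sub_nonneg.mpr hmono
          have hZ : X ((N : ℤ) + n) - X (-(N : ℤ) - n - 1) ≤ hi - lo := by omega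
          have hbase : ((X ((N : ℤ) + n) - X (-(N : ℤ) - n - 1) : ℤ) : ℝ) ≤ D := by
            rw [hD]
            exact Int.cast_le.mpr hZ
          exact mul_le_mul_of_nonneg_right
            (mul_le_mul_of_nonneg_right (pow_le_pow_left₀ hbase0 hbase n)
              (by positivity)) hC0
        exact abs_le_helper h1 h2
      rw [Function.iterate_succ_apply', ← hg]
      rw [show ((N : ℤ) + ((n + 1 : ℕ) : ℤ)) = ((N + n : ℕ) : ℤ) + 1 by push_cast; ring,
        show (-(N : ℤ) - ((n + 1 : ℕ) : ℤ) - 1) = -((N + n : ℕ) : ℤ) - 2 by push_cast; ring]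
      rw [Lgen_eq_sum (N + n) g hloc hη hX, ← hlo, ← hhi]
      have hcard : (((Finset.Ioc lo hi).card : ℕ) : ℝ) = D := by
        rw [Int.card_Ioc, hD]
        have := Int.toNat_of_nonneg (sub_nonneg.mpr hlohi)
        exact_mod_cast congrArg (Int.cast : ℤ → ℝ) this
      calc |∑ i ∈ Finset.Ioc lo hi, (g (T i η) - g η)|
          ≤ ∑ i ∈ Finset.Ioc lo hi, |g (T i η) - g η| :=
            Finset.abs_sum_le_sum_abs _ _
        _ ≤ ∑ _i ∈ Finset.Ioc lo hi, (2 * B) :=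
            Finset.sum_le_sum fun i _ => hterm i
        _ = ((Finset.Ioc lo hi).card : ℝ) * (2 * B) := by
            rw [Finset.sum_const, nsmul_eq_mul]
        _ = D * (2 * B) := by rw [hcard]
        _ = ((hi - lo : ℤ) : ℝ) ^ (n + 1) * 2 ^ (n + 1) * C := by
            rw [hB, hD]; ring

end Main
/-- if `f : Ω₁ → ℝ` is `N`-local and bounded by `C = ‖f‖_∞`, then for every
`n ≥ 1` and `η ∈ Ω₁`,
`|Lⁿ f (η)| ≤ (|I_{-N-n}(η)| + … + |I_{N+n}(η)|)ⁿ · 2ⁿ · ‖f‖_∞`,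
where `|I_{-N-n}(η)| + … + |I_{N+n}(η)| = X_{N+n}(η) − X_{-N-n-1}(η)`. -/
theorem Lgen_iterate_bound (N : ℕ) (f : (ℤ → ℤ) → ℝ) (hf : IsNLocal N f)
    (C : ℝ) (hC : ∀ ζ, |f ζ| ≤ C)
    (η : ℤ → ℤ) (X : ℤ → ℤ) (hη : Omega1 η) (hX : IsEnum η X)
    (n : ℕ) (hn : 1 ≤ n) :
    |(Lgen^[n] f) η| ≤
      ((X ((N : ℤ) + n) - X (-(N : ℤ) - n - 1) : ℤ) : ℝ) ^ n * 2 ^ n * C := by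
  exact main_bound N f hf C hC n η X hη hX
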